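/- Let K be a field and let t, x, y ∈ K with x ≠ 0 satisfy x²·y + y² + x + t·x·y = 0. Then, setting ξ := −4/x and η := (8y + 4x² + 4tx)/x², one has η² = ξ³ + t²·ξ² − 8t·ξ + 16. -/

import Mathlib

/-- The change of coordinates ξ := −4/x, η := (8y+4x²+4tx)/x² transforms Beauville's equation
x²y+y²+x+txy=0 for Γ₀(9) into the Weierstrass form η² = ξ³+t²ξ²−8tξ+16. -/
theorem stmt_2 {K : Type*} [Field K] (t x y : K) (hx : x ≠ 0)
    (h : x ^ 2 * y + y ^ 2 + x + t * x * y = 0) :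
    ((8 * y + 4 * x ^ 2 + 4 * t * x) / x ^ 2) ^ 2 =
      (-4 / x) ^ 3 + t ^ 2 * (-4 / x) ^ 2 - 8 * t * (-4 / x) + 16 := by
  field_simp
  linear_combination (64:K) * h
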